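/- Let k be a local field and V a finite-dimensional normed k-vector space. Let A = k* ⋉ V be the homothety group, i.e., the semidirect product of the multiplicative group k* of k acting on the additive group V by scalar multiplication, equipped with the product topology (the analytic topology). Then every Hausdorff group topology ω on A coarser than the analytic topology induces on the subgroup V (identified with {1} × V) the norm topology of V. -/

import Mathlib

/-- The homothety group `k* ⋉ V` of a vector space `V` over a field `k`: the underlying set is
`kˣ × V`. -/
def Homothety (k V : Type*) [NontriviallyNormedField k] [NormedAddCommGroup V]
    [NormedSpace k V] : Type _ := kˣ × V

namespace Homothety

variable {k V : Type*} [NontriviallyNormedField k] [NormedAddCommGroup V] [NormedSpace k V]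

/-- Build an element of the homothety group from a scalar and a vector. -/
def mk (a : kˣ) (v : V) : Homothety k V := (a, v)

/-- Group structure on the homothety group: `(a, v) * (b, w) = (a * b, v + a • w)`. -/
instance : Group (Homothety k V) where
  mul p q := mk (p.1 * q.1) (p.2 + p.1 • q.2)
  one := mk 1 0
  inv p := mk p.1⁻¹ (-(p.1⁻¹ • p.2))
  mul_assoc p q r := by
    show mk ((p.1 * q.1) * r.1) ((p.2 + p.1 • q.2) + (p.1 * q.1) • r.2)
      = mk (p.1 * (q.1 * r.1)) (p.2 + p.1 • (q.2 + q.1 • r.2))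
    simp [mk, Prod.mk.injEq, mul_assoc, mul_smul, smul_add, add_assoc] <;> rfl
  one_mul p := by
    show mk (1 * p.1) (0 + (1 : kˣ) • p.2) = p
    simp [mk] <;> rfl
  mul_one p := by
    show mk (p.1 * 1) (p.2 + p.1 • (0 : V)) = p
    simp [mk] <;> rfl
  inv_mul_cancel p := by
    show mk (p.1⁻¹ * p.1) (-(p.1⁻¹ • p.2) + p.1⁻¹ • p.2) = mk 1 0
    simp [mk] <;> rfl

/-- The analytic topology on the homothety group: the product topology of `kˣ × V`. -/
instance analyticTopology : TopologicalSpace (Homothety k V) :=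
  inferInstanceAs (TopologicalSpace (kˣ × V))

end Homothety

open Filter Topology

namespace Homothety

variable {k V : Type*} [NontriviallyNormedField k] [NormedAddCommGroup V] [NormedSpace k V]

theorem mk_mul' (a b : kˣ) (v w : V) : mk a v * mk b w = mk (a * b) (v + a • w) := rfl

theorem mk_inv' (a : kˣ) (v : V) : (mk a v)⁻¹ = mk a⁻¹ (-(a⁻¹ • v)) := rfl

theorem one_def : (1 : Homothety k V) = mk 1 0 := rfl

theorem mk_inj {a b : kˣ} {v w : V} (h : mk a v = mk b w) : a = b ∧ v = w := by
  have h' : ((a, v) : kˣ × V) = (b, w) := h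
  exact ⟨congrArg Prod.fst h', congrArg Prod.snd h'⟩

/-- `v ↦ (1, v)` is continuous for the norm topology on `V` and the analytic topology. -/
theorem continuous_mk_one : Continuous (fun v : V => mk (1 : kˣ) v) :=
  show Continuous (fun v : V => ((1 : kˣ), v)) from continuous_const.prodMk continuous_id

/-- Uniqueness of limits in the Hausdorff topology `ω`. -/
private theorem omega_unique {G : Type*} (ω : TopologicalSpace G) (h2 : @T2Space G ω)
    {α : Type*} {l : Filter α} [l.NeBot] {f : α → G} {a b : G}
    (ha : Filter.Tendsto f l (@nhds G ω a)) (hb : Filter.Tendsto f l (@nhds G ω b)) : a = b :=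
  @tendsto_nhds_unique G α ω h2 f l a b _ ha hb

private theorem omega_mul {G : Type*} [Group G] (ω : TopologicalSpace G)
    (hg : @IsTopologicalGroup G ω _) {α : Type*} {l : Filter α} {f g : α → G} {a b : G}
    (hf : Filter.Tendsto f l (@nhds G ω a)) (hg' : Filter.Tendsto g l (@nhds G ω b)) :
    Filter.Tendsto (fun t => f t * g t) l (@nhds G ω (a * b)) :=
  by letI := ω; haveI := hg; exact hf.mul hg'

private theorem omega_const {G : Type*} (ω : TopologicalSpace G) {α : Type*} {l : Filter α}
    (a : G) : Filter.Tendsto (fun _ : α => a) l (@nhds G ω a) := by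
  letI := ω
  exact tendsto_const_nhds

private theorem omega_inv {G : Type*} [Group G] (ω : TopologicalSpace G)
    (hg : @IsTopologicalGroup G ω _) {α : Type*} {l : Filter α} {f : α → G} {a : G}
    (hf : Filter.Tendsto f l (@nhds G ω a)) :
    Filter.Tendsto (fun t => (f t)⁻¹) l (@nhds G ω a⁻¹) :=
  @Filter.Tendsto.inv G α ω _ hg.toContinuousInv f l a hf

end Homothety

/-- The key lemma: if, along an ultrafilter, `(1, f t)` tends to the identity in the coarser
Hausdorff group topology `ω`, then `f` tends to `0` in norm. -/
private theorem homothety_key {k V : Type*} [NontriviallyNormedField k] [LocallyCompactSpace k]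
    [NormedAddCommGroup V] [NormedSpace k V] [FiniteDimensional k V]
    (ω : TopologicalSpace (Homothety k V))
    (hωgrp : @IsTopologicalGroup (Homothety k V) ω _) (hωt2 : @T2Space (Homothety k V) ω)
    (hcoarser : Homothety.analyticTopology ≤ ω)
    {α : Type*} (u : Ultrafilter α) (f : α → V)
    (hf : Filter.Tendsto (fun t => Homothety.mk (1 : kˣ) (f t)) u (@nhds _ ω 1)) :
    Filter.Tendsto f u (nhds 0) := by
  classical
  haveI : ProperSpace V := FiniteDimensional.proper k V
  by_contra hcon
  -- extract `ε > 0` with `ε ≤ ‖f t‖` along `u`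
  rw [Metric.tendsto_nhds] at hcon
  push_neg at hcon
  obtain ⟨ε, εpos, hεne⟩ := hcon
  have hε : ∀ᶠ t in (u : Filter α), ε ≤ ‖f t‖ := by
    have := hεne.mono fun t ht => not_lt.2 ht
    filter_upwards [this] with t ht
    simpa [dist_zero_right] using not_lt.1 ht
  -- analytic convergence implies ω-convergence
  have hana : ∀ (g : α → Homothety k V) (z : Homothety k V),
      Filter.Tendsto g u (@nhds _ Homothety.analyticTopology z) →
      Filter.Tendsto g u (@nhds _ ω z) :=
    fun g z h => h.mono_right (nhds_mono hcoarser)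
  by_cases hbig : Filter.Tendsto (fun t => ‖f t‖) u Filter.atTop
  · -- Case: norms tend to infinity; conjugate a scalar close to 1 by `(1, f t)`.
    obtain ⟨a, ha⟩ := NormedField.exists_one_lt_norm k
    have ha0 : (0:ℝ) < ‖a‖ := lt_trans one_pos ha
    -- choose exponents putting `ψ v • v` in a fixed shell
    have hψex : ∀ v : V, ∃ m : ℤ, 0 < ‖v‖ → ‖v‖ ∈ Set.Ico (‖a‖ ^ m) (‖a‖ ^ (m + 1)) := by
      intro v
      by_cases h : 0 < ‖v‖
      · obtain ⟨m, hm⟩ := exists_mem_Ico_zpow h ha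
        exact ⟨m, fun _ => hm⟩
      · exact ⟨0, fun h' => absurd h' h⟩
    choose m hm using hψex
    set ψ : V → k := fun v => a ^ (-(m v + 1)) with hψdef
    have hψnorm : ∀ v : V, ‖ψ v‖ = (‖a‖ ^ (m v + 1))⁻¹ := by
      intro v
      rw [hψdef, norm_zpow, zpow_neg]
    -- bounds on the shell
    have hshell : ∀ v : V, 0 < ‖v‖ → ‖a‖⁻¹ ≤ ‖ψ v • v‖ ∧ ‖ψ v • v‖ ≤ 1 := by
      intro v hv
      obtain ⟨h1, h2⟩ := hm v hv
      have hpow : (0:ℝ) < ‖a‖ ^ (m v + 1) := zpow_pos ha0 _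
      have hnorm : ‖ψ v • v‖ = (‖a‖ ^ (m v + 1))⁻¹ * ‖v‖ := by
        rw [norm_smul, hψnorm]
      constructor
      · have he : (‖a‖ ^ (m v + 1))⁻¹ * ‖a‖ ^ (m v) = ‖a‖⁻¹ := by
          rw [← zpow_neg, ← zpow_add₀ (ne_of_gt ha0)]
          norm_num
        rw [hnorm, ← he]
        exact mul_le_mul_of_nonneg_left h1 (inv_nonneg.2 (le_of_lt hpow))
      · rw [hnorm, inv_mul_le_iff₀ hpow, mul_one]
        exact le_of_lt h2
    have hψsmall : ∀ v : V, 0 < ‖v‖ → ‖ψ v‖ ≤ ‖v‖⁻¹ := by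
      intro v hv
      rw [hψnorm]
      exact inv_anti₀ hv (le_of_lt (hm v hv).2)
    have h1le : ∀ᶠ t in (u : Filter α), 1 ≤ ‖f t‖ := hbig.eventually_ge_atTop 1
    have hfpos : ∀ᶠ t in (u : Filter α), 0 < ‖f t‖ :=
      h1le.mono fun t ht => lt_of_lt_of_le one_pos ht
    -- `ψ (f t) → 0`
    have hψ0 : Filter.Tendsto (fun t => ψ (f t)) u (nhds 0) := by
      apply squeeze_zero_norm' (a := fun t => ‖f t‖⁻¹)
      · filter_upwards [hfpos] with t ht using hψsmall (f t) ht
      · exact tendsto_inv_atTop_zero.comp hbig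
    have hev1 : ∀ᶠ t in (u : Filter α), ‖ψ (f t)‖ < 1 := by
      have h := Metric.tendsto_nhds.1 hψ0 1 one_pos
      filter_upwards [h] with t ht
      simpa [dist_zero_right] using ht
    have hevne : ∀ᶠ t in (u : Filter α), (1 : k) + ψ (f t) ≠ 0 := by
      filter_upwards [hev1] with t ht h0
      rw [eq_neg_of_add_eq_zero_right h0, norm_neg, norm_one] at ht
      exact lt_irrefl _ ht
    set cu : V → kˣ := fun v => if h : (1 : k) + ψ v = 0 then 1 else Units.mk0 _ h with hcudef
    have hcuv : ∀ᶠ t in (u : Filter α), ((cu (f t) : kˣ) : k) = 1 + ψ (f t) := by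
      filter_upwards [hevne] with t ht
      simp [hcudef, ht]
    have hcuvinv : ∀ᶠ t in (u : Filter α), (((cu (f t))⁻¹ : kˣ) : k) = ((1:k) + ψ (f t))⁻¹ := by
      filter_upwards [hevne] with t ht
      simp [hcudef, ht]
    -- `cu ∘ f → 1` in `kˣ`
    have hlim : Filter.Tendsto (fun t => (1:k) + ψ (f t)) u (nhds 1) := by
      simpa using tendsto_const_nhds.add hψ0
    have hcu1 : Filter.Tendsto (fun t => cu (f t)) u (nhds (1 : kˣ)) := by
      rw [Units.isEmbedding_embedProduct.tendsto_nhds_iff]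
      have hval : Filter.Tendsto (fun t => ((cu (f t) : kˣ) : k)) u (nhds 1) :=
        Filter.Tendsto.congr' (hcuv.mono fun t ht => ht.symm) hlim
      have hinv : Filter.Tendsto (fun t => (((cu (f t))⁻¹ : kˣ) : k)) u (nhds 1) := by
        refine Filter.Tendsto.congr' (hcuvinv.mono fun t ht => ht.symm) ?_
        simpa using hlim.inv₀ one_ne_zero
      have hop : Filter.Tendsto (fun t => MulOpposite.op (((cu (f t))⁻¹ : kˣ) : k)) u
          (nhds (MulOpposite.op (1:k))) := (MulOpposite.continuous_op.tendsto _).comp hinv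
      exact hval.prodMk_nhds hop
    -- the conjugated element tends to `1` in `ω`
    have hgω : Filter.Tendsto (fun t => Homothety.mk (cu (f t)) (0:V)) u (@nhds _ ω 1) := by
      apply hana
      rw [Homothety.one_def]
      exact (hcu1.prodMk_nhds (tendsto_const_nhds : Filter.Tendsto (fun _ : α => (0:V)) u _) :
        Filter.Tendsto (fun t => ((cu (f t) : kˣ), (0:V))) u (nhds ((1:kˣ), (0:V))))
    have hinvω := Homothety.omega_inv ω hωgrp hf
    rw [inv_one] at hinvω
    have hqω : Filter.Tendsto
        (fun t => (Homothety.mk 1 (f t))⁻¹ * Homothety.mk (cu (f t)) 0 * Homothety.mk 1 (f t)) u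
        (@nhds _ ω 1) := by
      have := Homothety.omega_mul ω hωgrp (Homothety.omega_mul ω hωgrp hinvω hgω) hf
      simpa using this
    -- explicit formula for the conjugated element
    have hqeq : ∀ t, (Homothety.mk 1 (f t))⁻¹ * Homothety.mk (cu (f t)) 0 * Homothety.mk 1 (f t)
        = Homothety.mk (cu (f t)) (-(f t) + cu (f t) • f t) := by
      intro t
      rw [Homothety.mk_inv', Homothety.mk_mul', Homothety.mk_mul']
      simp
    set s : α → V := fun t => -(f t) + cu (f t) • f t with hsdef
    have hsecond_eq : ∀ᶠ t in (u : Filter α), s t = ψ (f t) • f t := by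
      filter_upwards [hcuv] with t ht
      rw [hsdef]
      simp only [Units.smul_def, ht, add_smul, one_smul]
      abel
    set K : Set V := {v : V | ‖a‖⁻¹ ≤ ‖v‖ ∧ ‖v‖ ≤ 1} with hKdef
    have hKcl : IsClosed K := (isClosed_le continuous_const continuous_norm).inter
      (isClosed_le continuous_norm continuous_const)
    have hKcomp : IsCompact K := (isCompact_closedBall (0:V) 1).of_isClosed_subset hKcl
      (fun v hv => by simpa [Metric.mem_closedBall, dist_zero_right] using hv.2)
    have hKmem : K ∈ Ultrafilter.map s u := by
      have : ∀ᶠ t in (u : Filter α), s t ∈ K := by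
        filter_upwards [hsecond_eq, hfpos] with t he hp
        rw [he]
        exact hshell (f t) hp
      exact this
    obtain ⟨u₀, hu₀K, hu₀⟩ := hKcomp.ultrafilter_le_nhds (Ultrafilter.map s u)
      (le_principal_iff.2 hKmem)
    have hsu₀ : Filter.Tendsto s u (nhds u₀) := hu₀
    have hq_ana : Filter.Tendsto
        (fun t => (Homothety.mk 1 (f t))⁻¹ * Homothety.mk (cu (f t)) 0 * Homothety.mk 1 (f t)) u
        (@nhds _ ω (Homothety.mk 1 u₀)) := by
      apply hana
      rw [show (fun t => (Homothety.mk 1 (f t))⁻¹ * Homothety.mk (cu (f t)) 0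
          * Homothety.mk 1 (f t)) = fun t => Homothety.mk (cu (f t)) (s t) from funext hqeq]
      exact (hcu1.prodMk_nhds hsu₀ :
        Filter.Tendsto (fun t => ((cu (f t) : kˣ), s t)) u (nhds ((1:kˣ), u₀)))
    have h10 := Homothety.omega_unique ω hωt2 hqω hq_ana
    rw [Homothety.one_def] at h10
    have hu₀0 : u₀ = 0 := ((Homothety.mk_inj h10).2).symm
    rw [hu₀0] at hu₀K
    obtain ⟨hc, -⟩ := hu₀K
    rw [norm_zero] at hc
    exact absurd hc (not_le.2 (inv_pos.2 ha0))
  · -- Case: norms do not tend to infinity; extract a norm-convergent subnet.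
    rw [Filter.tendsto_atTop] at hbig
    push_neg at hbig
    obtain ⟨M, hM⟩ := hbig
    have hMev : ∀ᶠ t in (u : Filter α), ‖f t‖ < M := by
      have := hM.mono fun t ht => not_le.2 ht
      filter_upwards [this] with t ht using not_le.1 ht
    set K : Set V := {v : V | ε ≤ ‖v‖ ∧ ‖v‖ ≤ M} with hKdef
    have hKcl : IsClosed K := (isClosed_le continuous_const continuous_norm).inter
      (isClosed_le continuous_norm continuous_const)
    have hKcomp : IsCompact K := (isCompact_closedBall (0:V) M).of_isClosed_subset hKcl
      (fun v hv => by simpa [Metric.mem_closedBall, dist_zero_right] using hv.2)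
    have hKmem : K ∈ Ultrafilter.map f u := by
      have : ∀ᶠ t in (u : Filter α), f t ∈ K := by
        filter_upwards [hε, hMev] with t h1 h2 using ⟨h1, le_of_lt h2⟩
      exact this
    obtain ⟨u₀, hu₀K, hu₀⟩ := hKcomp.ultrafilter_le_nhds (Ultrafilter.map f u)
      (le_principal_iff.2 hKmem)
    have hfu₀ : Filter.Tendsto f u (nhds u₀) := hu₀
    have h1ana : Filter.Tendsto (fun t => Homothety.mk (1 : kˣ) (f t)) u
        (@nhds _ Homothety.analyticTopology (Homothety.mk 1 u₀)) :=
      (@Continuous.tendsto V (Homothety k V) _ Homothety.analyticTopology _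
        Homothety.continuous_mk_one u₀).comp hfu₀
    have h1 : Filter.Tendsto (fun t => Homothety.mk (1 : kˣ) (f t)) u
        (@nhds _ ω (Homothety.mk 1 u₀)) := hana _ _ h1ana
    have h10 := Homothety.omega_unique ω hωt2 hf h1
    rw [Homothety.one_def] at h10
    have hu₀0 : u₀ = 0 := ((Homothety.mk_inj h10).2).symm
    rw [hu₀0] at hu₀K
    obtain ⟨hc, -⟩ := hu₀K
    rw [norm_zero] at hc
    exact absurd hc (not_le.2 εpos)

theorem stmt4 {k V : Type*} [NontriviallyNormedField k] [LocallyCompactSpace k]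
    [NormedAddCommGroup V] [NormedSpace k V] [FiniteDimensional k V]
    (ω : TopologicalSpace (Homothety k V))
    (hωgrp : @IsTopologicalGroup (Homothety k V) ω _) (hωt2 : @T2Space (Homothety k V) ω)
    (hcoarser : Homothety.analyticTopology ≤ ω) :
    TopologicalSpace.induced (fun v : V => Homothety.mk 1 v) ω
      = (inferInstance : TopologicalSpace V) := by
  refine le_antisymm ?_ ?_
  · -- hard direction
    rw [le_iff_nhds]
    intro x
    rw [Filter.le_iff_ultrafilter]
    intro u hu
    rw [nhds_induced] at hu
    have hmap : Filter.Tendsto (fun v : V => Homothety.mk (1:kˣ) v) u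
        (@nhds _ ω (Homothety.mk 1 x)) := Filter.tendsto_iff_comap.2 hu
    have hconst : Filter.Tendsto (fun _ : V => (Homothety.mk (1:kˣ) x)⁻¹) u
        (@nhds _ ω (Homothety.mk (1:kˣ) x)⁻¹) := Homothety.omega_const ω _
    have hmul := Homothety.omega_mul ω hωgrp hconst hmap
    rw [inv_mul_cancel] at hmul
    have heq : ∀ w : V, (Homothety.mk (1:kˣ) x)⁻¹ * Homothety.mk (1:kˣ) w
        = Homothety.mk (1:kˣ) (w - x) := by
      intro w
      rw [Homothety.mk_inv', Homothety.mk_mul']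
      simp [neg_add_eq_sub]
    rw [show (fun w : V => (Homothety.mk (1:kˣ) x)⁻¹ * Homothety.mk (1:kˣ) w)
        = fun w : V => Homothety.mk (1:kˣ) (w - x) from funext heq] at hmul
    have hkey := homothety_key ω hωgrp hωt2 hcoarser u _ hmul
    have hx : Filter.Tendsto (fun w : V => (w - x) + x) u (nhds (0 + x)) :=
      hkey.add tendsto_const_nhds
    simp only [sub_add_cancel, zero_add] at hx
    exact hx
  · -- easy direction
    calc (inferInstance : TopologicalSpace V)
        ≤ TopologicalSpace.induced (fun v : V => Homothety.mk 1 v) Homothety.analyticTopology :=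
          continuous_iff_le_induced.1 Homothety.continuous_mk_one
      _ ≤ TopologicalSpace.induced (fun v : V => Homothety.mk 1 v) ω :=
          induced_mono hcoarser
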